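/- The map p : ℍ∖{0} → Im ℍ∖{0}, p(x) = x i x*, is surjective, and p(x) = p(y) if and only if y = x e^{iα} for some α ∈ ℝ; i.e., the fibers of p are exactly the orbits of the right U(1)-action x ↦ x e^{iα}. -/

import Mathlib

/-- The imaginary unit `i` in the quaternions. -/
noncomputable def qi : Quaternion ℝ := ⟨0, 1, 0, 0⟩

/-- The unit complex number `e^{iα} = cos α + i sin α` inside the quaternions. -/
noncomputable def expi (α : ℝ) : Quaternion ℝ := ⟨Real.cos α, Real.sin α, 0, 0⟩

lemma qi_re : qi.re = 0 := rfl
lemma qi_imI : qi.imI = 1 := rfl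
lemma qi_imJ : qi.imJ = 0 := rfl
lemma qi_imK : qi.imK = 0 := rfl

lemma conj_formula (x : Quaternion ℝ) : x * qi * star x =
    ⟨0, x.re^2 + x.imI^2 - x.imJ^2 - x.imK^2,
      2*(x.imI*x.imJ + x.re*x.imK), 2*(x.imI*x.imK - x.re*x.imJ)⟩ := by
  ext <;> simp [qi_re, qi_imI, qi_imJ, qi_imK, Quaternion.re_mul, Quaternion.imI_mul, Quaternion.imJ_mul,
    Quaternion.imK_mul] <;> ring

lemma normSq_qi : Quaternion.normSq qi = 1 := by
  simp [qi_re, qi_imI, qi_imJ, qi_imK, Quaternion.normSq_def']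

lemma expi_conj (α : ℝ) : expi α * qi * star (expi α) = qi := by
  rw [conj_formula]
  ext <;> simp [expi, qi] <;> nlinarith [Real.sin_sq_add_cos_sq α]

lemma key (u : Quaternion ℝ) (h : u * qi * star u = qi) : ∃ α, u = expi α := by
  have hn : Quaternion.normSq u = 1 := by
    have h2 := congrArg Quaternion.normSq h
    rw [map_mul, map_mul, normSq_qi, Quaternion.normSq_star] at h2
    have hsq : Quaternion.normSq u ^ 2 = 1 := by rw [sq]; linarith [h2]
    have := Quaternion.normSq_nonneg (a := u)
    nlinarith [hsq]
  have hcomm : u * qi = qi * u := by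
    have h3 := congrArg (· * u) h
    simp only [mul_assoc] at h3
    rw [Quaternion.star_mul_self, hn] at h3
    simpa using h3
  have hJ : u.imJ = 0 := by
    have := congrArg QuaternionAlgebra.imK hcomm
    simp [qi_re, qi_imI, qi_imJ, qi_imK, Quaternion.imK_mul] at this
    linarith
  have hK : u.imK = 0 := by
    have := congrArg QuaternionAlgebra.imJ hcomm
    simp [qi_re, qi_imI, qi_imJ, qi_imK, Quaternion.imJ_mul] at this
    linarith
  have habs : u.re ^ 2 + u.imI ^ 2 = 1 := by
    rw [Quaternion.normSq_def', hJ, hK] at hn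
    nlinarith
  set w : ℂ := ⟨u.re, u.imI⟩ with hw
  have hwabs : ‖w‖ = 1 := by
    simp [Complex.norm_def, Complex.normSq, hw]
    nlinarith [habs]
  have hwne : w ≠ 0 := by
    intro h0; rw [h0] at hwabs; simp at hwabs
  refine ⟨w.arg, ?_⟩
  have hc := Complex.cos_arg hwne
  have hs := Complex.sin_arg w
  rw [hwabs] at hc hs
  simp [hw] at hc hs
  ext <;> simp [expi, hc, hs, hJ, hK, hw]

/-- The map `p : ℍ∖{0} → Im ℍ∖{0}`, `p(x) = x i x*`, is surjective, and
`p(x) = p(y)` if and only if `y = x e^{iα}` for some `α ∈ ℝ`. -/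
theorem stmt7 :
    (∀ z : Quaternion ℝ, z.re = 0 → z ≠ 0 →
      ∃ x : Quaternion ℝ, x ≠ 0 ∧ x * qi * star x = z) ∧
    (∀ x y : Quaternion ℝ, x ≠ 0 → y ≠ 0 →
      (x * qi * star x =
          y * qi * star y ↔
        ∃ α : ℝ, y = x * expi α)) := by
  constructor
  · intro z hre hz
    set a := z.imI with ha
    set b := z.imJ with hb
    set c := z.imK with hc
    have hpos : 0 < a ^ 2 + b ^ 2 + c ^ 2 := by
      by_contra hle
      push_neg at hle
      have h1 : a = 0 ∧ b = 0 ∧ c = 0 := by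
        constructor; nlinarith; constructor; nlinarith; nlinarith
      exact hz (by ext <;> simp [hre, ← ha, ← hb, ← hc, h1.1, h1.2.1, h1.2.2, Quaternion.re_zero,
        Quaternion.imI_zero, Quaternion.imJ_zero, Quaternion.imK_zero])
    set n := Real.sqrt (a ^ 2 + b ^ 2 + c ^ 2) with hn
    have hn2 : n ^ 2 = a ^ 2 + b ^ 2 + c ^ 2 := Real.sq_sqrt hpos.le
    have hnpos : 0 < n := Real.sqrt_pos.mpr hpos
    have hna : -n ≤ a := by nlinarith
    rcases eq_or_lt_of_le hna with heq | hlt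
    · -- a = -n, b = c = 0
      have hb0 : b = 0 := by nlinarith
      have hc0 : c = 0 := by nlinarith
      refine ⟨(⟨0, 0, Real.sqrt n, 0⟩ : Quaternion ℝ), ?_, ?_⟩
      · intro h0
        have := congrArg QuaternionAlgebra.imJ h0
        simp [Real.sqrt_eq_zero hnpos.le, Quaternion.imJ_zero] at this
        exact hnpos.ne' this
      · refine (conj_formula _).trans ?_
        ext <;> simp [hre, ← ha, ← hb, ← hc, hb0, hc0, ← heq,
          Real.sq_sqrt hnpos.le]
    · -- n + a > 0
      have hsum : 0 < n + a := by linarith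
      set p := Real.sqrt ((n + a) / 2) with hp
      have hp2 : p ^ 2 = (n + a) / 2 := Real.sq_sqrt (by linarith)
      have hppos : 0 < p := Real.sqrt_pos.mpr (by linarith)
      refine ⟨(⟨0, p, b / (2 * p), c / (2 * p)⟩ : Quaternion ℝ), ?_, ?_⟩
      · intro h0
        have := congrArg QuaternionAlgebra.imI h0
        simp [Quaternion.imI_zero] at this
        exact hppos.ne' this
      · refine (conj_formula _).trans ?_
        have hbc : b ^ 2 + c ^ 2 = (n - a) * (n + a) := by nlinarith
        ext <;> simp [hre, ← ha, ← hb, ← hc] <;> field_simp <;> nlinarith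
  · intro x y hx hy
    constructor
    · intro h
      have hsx : star x ≠ 0 := star_ne_zero.mpr hx
      have hxy : x * (x⁻¹ * y) = y := by rw [← mul_assoc, mul_inv_cancel₀ hx, one_mul]
      have e1 : x * ((x⁻¹ * y) * qi * star (x⁻¹ * y)) * star x = x * qi * star x := by
        calc x * ((x⁻¹ * y) * qi * star (x⁻¹ * y)) * star x
            = (x * (x⁻¹ * y)) * qi * star (x * (x⁻¹ * y)) := by
              rw [star_mul x]; simp only [mul_assoc]
          _ = x * qi * star x := by rw [hxy, ← h]
      have hconj := mul_left_cancel₀ hx (mul_right_cancel₀ hsx e1)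
      obtain ⟨α, hα⟩ := key _ hconj
      exact ⟨α, by rw [← hα, hxy]⟩
    · rintro ⟨α, rfl⟩
      have e2 : x * expi α * qi * star (x * expi α) = x * qi * star x := by
        calc x * expi α * qi * star (x * expi α)
            = x * (expi α * qi * star (expi α)) * star x := by
              rw [star_mul]; simp only [mul_assoc]
          _ = x * qi * star x := by rw [expi_conj]
      exact e2.symm
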